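/- Let (A; {E_i}; A*; {E*_i}) be a Leonard system on V and fix a nonzero vector v*_0 ∈ E*_0V. Then the vectors τ_i(A)v*_0 for 0 ≤ i ≤ d form a basis of V, where τ_i(λ) = (λ-θ_0)⋯(λ-θ_{i-1}); and with respect to this basis the matrix representing A is lower bidiagonal with diagonal entries θ_0,...,θ_d and subdiagonal entries all 1. -/

import Mathlib

open Polynomial

/-- The primitive idempotent `E_i = ∏_{j ≠ i} (A - θ_j I)/(θ_i - θ_j)` of a
multiplicity-free operator `A` with eigenvalues `θ_0, …, θ_d`. -/
noncomputable def primIdem {K : Type} [Field K] {V : Type} [AddCommGroup V] [Module K V]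
    {d : ℕ} (A : Module.End K V) (θ : Fin (d+1) → K) (i : Fin (d+1)) : Module.End K V :=
  Polynomial.aeval A (∏ j ∈ Finset.univ.erase i, ((θ i - θ j)⁻¹ • (X - C (θ j))))

/-- The polynomial `τ_i(λ) = (λ-θ_0)(λ-θ_1)⋯(λ-θ_{i-1})`. -/
noncomputable def tauP {K : Type} [Field K] (d : ℕ) (θ : Fin (d+1) → K) (i : ℕ) :
    Polynomial K :=
  ∏ k ∈ Finset.univ.filter (fun k : Fin (d+1) => (k : ℕ) < i), (X - C (θ k))

/-- The polynomial `η_i(λ) = (λ-θ_d)(λ-θ_{d-1})⋯(λ-θ_{d-i+1})`. -/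
noncomputable def etaP {K : Type} [Field K] (d : ℕ) (θ : Fin (d+1) → K) (i : ℕ) :
    Polynomial K :=
  ∏ k ∈ Finset.univ.filter (fun k : Fin (d+1) => d - i < (k : ℕ)), (X - C (θ k))

/-- A Leonard system on a `(d+1)`-dimensional vector space `V` over a field `K`. -/
structure LeonardSystem (K V : Type) [Field K] [AddCommGroup V] [Module K V] (d : ℕ) where
  A : Module.End K V
  As : Module.End K V
  θ : Fin (d+1) → K
  θs : Fin (d+1) → K
  hfin : FiniteDimensional K V
  hdim : Module.finrank K V = d + 1
  θ_inj : Function.Injective θ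
  θs_inj : Function.Injective θs
  hEig : ∀ i, Module.End.HasEigenvalue A (θ i)
  hEigs : ∀ i, Module.End.HasEigenvalue As (θs i)
  hFar : ∀ i j : Fin (d+1), ((i:ℕ) + 1 < j ∨ (j:ℕ) + 1 < i) →
    primIdem A θ i * As * primIdem A θ j = 0
  hNear : ∀ i j : Fin (d+1), ((i:ℕ) + 1 = j ∨ (j:ℕ) + 1 = i) →
    primIdem A θ i * As * primIdem A θ j ≠ 0
  hFars : ∀ i j : Fin (d+1), ((i:ℕ) + 1 < j ∨ (j:ℕ) + 1 < i) →
    primIdem As θs i * A * primIdem As θs j = 0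
  hNears : ∀ i j : Fin (d+1), ((i:ℕ) + 1 = j ∨ (j:ℕ) + 1 = i) →
    primIdem As θs i * A * primIdem As θs j ≠ 0

namespace LeonardSystem

variable {K : Type} [Field K] {V : Type} [AddCommGroup V] [Module K V] {d : ℕ}
  (L : LeonardSystem K V d)

/-- `E_i`, the `i`-th primitive idempotent of `A`. -/
noncomputable def E (i : Fin (d+1)) : Module.End K V := primIdem L.A L.θ i

/-- `E*_i`, the `i`-th primitive idempotent of `A*`. -/
noncomputable def Es (i : Fin (d+1)) : Module.End K V := primIdem L.As L.θs i

/-- `τ_i(A)`. -/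
noncomputable def tau (i : ℕ) : Module.End K V := Polynomial.aeval L.A (tauP d L.θ i)

/-- `η_i(A)`. -/
noncomputable def eta (i : ℕ) : Module.End K V := Polynomial.aeval L.A (etaP d L.θ i)

/-- The first split sequence `φ_i = (θ*_0-θ*_i) tr(τ_i(A)E*_0)/tr(τ_{i-1}(A)E*_0)`,
meaningful for `1 ≤ i ≤ d`. -/
noncomputable def φ (i : ℕ) : K :=
  if h : i < d + 1 then
    (L.θs 0 - L.θs ⟨i, h⟩) * (LinearMap.trace K V (L.tau i * L.Es 0))
      / (LinearMap.trace K V (L.tau (i-1) * L.Es 0))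
  else 0

/-- The second split sequence `ϕ_i = (θ*_0-θ*_i) tr(η_i(A)E*_0)/tr(η_{i-1}(A)E*_0)`,
meaningful for `1 ≤ i ≤ d`. -/
noncomputable def ϕ (i : ℕ) : K :=
  if h : i < d + 1 then
    (L.θs 0 - L.θs ⟨i, h⟩) * (LinearMap.trace K V (L.eta i * L.Es 0))
      / (LinearMap.trace K V (L.eta (i-1) * L.Es 0))
  else 0

/-- The switching element `S = ∑_r (ϕ_d⋯ϕ_{d-r+1})/(φ_1⋯φ_r) E_r`. -/
noncomputable def S : Module.End K V :=
  ∑ r : Fin (d+1),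
    ((∏ k ∈ Finset.Icc (d - (r:ℕ) + 1) d, L.ϕ k) / (∏ k ∈ Finset.Icc 1 (r:ℕ), L.φ k)) • L.E r

/-- The dual switching element `S* = ∑_r (ϕ_1⋯ϕ_r)/(φ_1⋯φ_r) E*_r`. -/
noncomputable def Ss : Module.End K V :=
  ∑ r : Fin (d+1),
    ((∏ k ∈ Finset.Icc 1 (r:ℕ), L.ϕ k) / (∏ k ∈ Finset.Icc 1 (r:ℕ), L.φ k)) • L.Es r

end LeonardSystem


section MultFree

open Module Polynomial DirectSum

variable {K : Type} [Field K] {V : Type} [AddCommGroup V] [Module K V] {d : ℕ}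

/-- The Lagrange-type polynomial underlying `primIdem`. -/
noncomputable def lagP (μ : Fin (d+1) → K) (i : Fin (d+1)) : Polynomial K :=
  ∏ j ∈ Finset.univ.erase i, ((μ i - μ j)⁻¹ • (X - C (μ j)))

variable (B : Module.End K V) (μ : Fin (d+1) → K)

lemma primIdem_eq_aeval (i : Fin (d+1)) :
    primIdem B μ i = Polynomial.aeval B (lagP μ i) := rfl

lemma lagP_eval (hinj : Function.Injective μ) (i j : Fin (d+1)) :
    (lagP μ i).eval (μ j) = if j = i then 1 else 0 := by
  rcases eq_or_ne j i with h | h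
  · subst h
    rw [if_pos rfl, lagP, eval_prod]
    refine Finset.prod_eq_one fun k hk => ?_
    have hne : μ j - μ k ≠ 0 :=
      sub_ne_zero.2 fun hh => (Finset.mem_erase.1 hk).1 (hinj hh).symm
    simp [smul_eq_C_mul, inv_mul_cancel₀ hne]
  · rw [if_neg h, lagP, eval_prod]
    refine Finset.prod_eq_zero (Finset.mem_erase.2 ⟨h, Finset.mem_univ j⟩) ?_
    simp [smul_eq_C_mul]

variable [FiniteDimensional K V]
variable (hdim : Module.finrank K V = d + 1) (hinj : Function.Injective μ)
  (hEig : ∀ i, Module.End.HasEigenvalue B (μ i))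

include hinj in
lemma prod_dvd_of_roots {p : Polynomial K} (hp : ∀ i, p.IsRoot (μ i)) :
    (∏ i, (X - C (μ i))) ∣ p := by
  refine Finset.prod_dvd_of_coprime ?_ fun i _ => ?_
  · intro a _ b _ hab
    exact Polynomial.pairwise_coprime_X_sub_C hinj hab
  · exact Polynomial.dvd_iff_isRoot.2 (hp i)

include hdim hinj hEig in
lemma minpoly_eq_prod : minpoly K B = ∏ i, (X - C (μ i)) := by
  have hdvd : (∏ i, (X - C (μ i))) ∣ minpoly K B :=
    prod_dvd_of_roots μ hinj fun i =>
      (Module.End.hasEigenvalue_iff_isRoot).1 (hEig i)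
  have hm : (∏ i : Fin (d+1), (X - C (μ i))).Monic :=
    monic_prod_of_monic _ _ fun i _ => monic_X_sub_C _
  have hmp : (minpoly K B).Monic := minpoly.monic (LinearMap.isIntegral B)
  have hdeg2 : (∏ i : Fin (d+1), (X - C (μ i))).natDegree = d + 1 := by
    rw [Polynomial.natDegree_prod _ _ fun i _ => X_sub_C_ne_zero (μ i)]
    simp
  have hdeg1 : (minpoly K B).natDegree ≤
      (∏ i : Fin (d+1), (X - C (μ i))).natDegree := by
    have h := Polynomial.natDegree_le_of_dvd (LinearMap.minpoly_dvd_charpoly B)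
      (LinearMap.charpoly_monic B).ne_zero
    rw [LinearMap.charpoly_natDegree, hdim] at h
    rw [hdeg2]; exact h
  exact (Polynomial.eq_of_monic_of_associated hm hmp
    (Polynomial.associated_of_dvd_of_natDegree_le hdvd hmp.ne_zero hdeg1)).symm

include hdim hinj hEig in
lemma aeval_eq_zero_of_roots {p : Polynomial K} (hp : ∀ i, p.IsRoot (μ i)) :
    Polynomial.aeval B p = 0 := by
  obtain ⟨q, hq⟩ := prod_dvd_of_roots μ hinj hp
  rw [hq, map_mul, ← minpoly_eq_prod B μ hdim hinj hEig, minpoly.aeval, zero_mul]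

include hdim hinj hEig in
lemma primIdem_mul_self (i : Fin (d+1)) :
    primIdem B μ i * primIdem B μ i = primIdem B μ i := by
  have h : Polynomial.aeval B (lagP μ i * lagP μ i - lagP μ i) = 0 := by
    refine aeval_eq_zero_of_roots B μ hdim hinj hEig fun l => ?_
    simp only [IsRoot, eval_sub, eval_mul, lagP_eval μ hinj]
    rcases eq_or_ne l i with h | h <;> simp [h]
  rw [map_sub, map_mul, sub_eq_zero] at h
  exact h

include hdim hinj hEig in
lemma primIdem_mul_ne (i j : Fin (d+1)) (hij : i ≠ j) :
    primIdem B μ i * primIdem B μ j = 0 := by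
  have h : Polynomial.aeval B (lagP μ i * lagP μ j) = 0 := by
    refine aeval_eq_zero_of_roots B μ hdim hinj hEig fun l => ?_
    simp only [IsRoot, eval_mul, lagP_eval μ hinj]
    rcases eq_or_ne l i with h | h
    · subst h; simp [hij]
    · simp [h]
  rw [map_mul] at h
  exact h

include hdim hinj hEig in
lemma sum_primIdem : ∑ i, primIdem B μ i = 1 := by
  have h : Polynomial.aeval B ((∑ i, lagP μ i) - 1) = 0 := by
    refine aeval_eq_zero_of_roots B μ hdim hinj hEig fun l => ?_
    simp only [IsRoot, eval_sub, eval_finset_sum, eval_one, lagP_eval μ hinj]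
    rw [Finset.sum_ite_eq Finset.univ l (fun _ => (1 : K))]
    simp
  rw [map_sub, map_sum, map_one, sub_eq_zero] at h
  exact h

include hdim hinj hEig in
lemma apply_primIdem (i : Fin (d+1)) (v : V) :
    B (primIdem B μ i v) = μ i • primIdem B μ i v := by
  have h : Polynomial.aeval B ((X - C (μ i)) * lagP μ i) = 0 := by
    refine aeval_eq_zero_of_roots B μ hdim hinj hEig fun l => ?_
    simp only [IsRoot, eval_mul, eval_sub, eval_X, eval_C, lagP_eval μ hinj]
    rcases eq_or_ne l i with h | h <;> simp [h]
  rw [map_mul, map_sub, aeval_X, aeval_C] at h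
  have h2 := congrArg (fun f : Module.End K V => f v) h
  simp only [Module.End.mul_apply, LinearMap.sub_apply, LinearMap.zero_apply] at h2
  have h3 : B (primIdem B μ i v) -
      algebraMap K (Module.End K V) (μ i) (primIdem B μ i v) = 0 := h2
  rw [sub_eq_zero] at h3
  rw [h3, Module.algebraMap_end_apply]

include hinj in
lemma primIdem_apply_eigen (i : Fin (d+1)) {v : V}
    (hv : v ∈ Module.End.eigenspace B (μ i)) : primIdem B μ i v = v := by
  rcases eq_or_ne v 0 with rfl | h
  · simp
  · rw [primIdem_eq_aeval,
      Module.End.aeval_apply_of_hasEigenvector (⟨hv, h⟩ : B.HasEigenvector (μ i) v),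
      lagP_eval μ hinj, if_pos rfl, one_smul]

include hdim hinj hEig in
lemma range_primIdem (i : Fin (d+1)) :
    LinearMap.range (primIdem B μ i) = Module.End.eigenspace B (μ i) := by
  apply le_antisymm
  · rintro _ ⟨v, rfl⟩
    exact Module.End.mem_eigenspace_iff.2 (apply_primIdem B μ hdim hinj hEig i v)
  · intro v hv
    exact ⟨v, primIdem_apply_eigen B μ hinj i hv⟩

include hdim hinj hEig in
lemma finrank_eigenspace_eq_one (i : Fin (d+1)) :
    Module.finrank K (Module.End.eigenspace B (μ i)) = 1 := by
  have htop : (⨆ j, Module.End.eigenspace B (μ j)) = ⊤ := by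
    rw [eq_top_iff]
    intro v _
    have hsum : (∑ j, primIdem B μ j) v = v := by
      rw [sum_primIdem B μ hdim hinj hEig]; rfl
    have hsum2 : ∑ j, primIdem B μ j v = v := by
      rw [← LinearMap.sum_apply]; exact hsum
    rw [← hsum2]
    refine Submodule.sum_mem _ fun j _ => Submodule.mem_iSup_of_mem j ?_
    rw [← range_primIdem B μ hdim hinj hEig j]
    exact ⟨v, rfl⟩
  have hind : iSupIndep (fun j : Fin (d+1) => Module.End.eigenspace B (μ j)) :=
    (Module.End.eigenspaces_iSupIndep B).comp hinj
  have hint : DirectSum.IsInternal (fun j : Fin (d+1) => Module.End.eigenspace B (μ j)) :=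
    DirectSum.isInternal_submodule_of_iSupIndep_of_iSup_eq_top hind htop
  have hequiv : Module.finrank K (⨁ j : Fin (d+1), ↥(Module.End.eigenspace B (μ j))) =
      Module.finrank K V :=
    (LinearEquiv.ofBijective (DirectSum.coeLinearMap _) hint).finrank_eq
  have hsum : ∑ j : Fin (d+1), Module.finrank K (Module.End.eigenspace B (μ j)) = d + 1 := by
    rw [← Module.finrank_directSum, hequiv, hdim]
  have hpos : ∀ j : Fin (d+1), 0 < Module.finrank K (Module.End.eigenspace B (μ j)) := by
    intro j
    obtain ⟨x, hx⟩ := (hEig j).exists_hasEigenvector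
    refine Module.finrank_pos_iff_exists_ne_zero.2 ⟨⟨x, hx.1⟩, ?_⟩
    simpa [Submodule.mk_eq_zero] using hx.2
  by_contra hne
  have h2 : 2 ≤ Module.finrank K (Module.End.eigenspace B (μ i)) := by
    have := hpos i
    omega
  have hlt : ∑ j : Fin (d+1), 1 < ∑ j : Fin (d+1),
      Module.finrank K (Module.End.eigenspace B (μ j)) := by
    refine Finset.sum_lt_sum (fun j _ => hpos j) ⟨i, Finset.mem_univ i, ?_⟩
    omega
  simp only [Finset.sum_const, Finset.card_univ, Fintype.card_fin, smul_eq_mul, mul_one] at hlt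
  omega

include hdim hinj hEig in
lemma exists_smul_of_mem_range (i : Fin (d+1)) {w u : V}
    (hw : w ∈ LinearMap.range (primIdem B μ i)) (hw0 : w ≠ 0)
    (hu : u ∈ LinearMap.range (primIdem B μ i)) : ∃ c : K, c • w = u := by
  rw [range_primIdem B μ hdim hinj hEig i] at hw hu
  set S := Module.End.eigenspace B (μ i)
  have h1 : Module.finrank K S = 1 := finrank_eigenspace_eq_one B μ hdim hinj hEig i
  have hwne : (⟨w, hw⟩ : S) ≠ 0 := by simpa [Submodule.mk_eq_zero] using hw0
  obtain ⟨c, hc⟩ := (finrank_eq_one_iff_of_nonzero' (⟨w, hw⟩ : S) hwne).1 h1 ⟨u, hu⟩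
  exact ⟨c, congrArg Subtype.val hc⟩

end MultFree

section TauPoly

open Polynomial

variable {K : Type} [Field K] {d : ℕ} (θ : Fin (d+1) → K)

lemma tauP_zero : tauP d θ 0 = 1 := by
  rw [tauP]
  convert Finset.prod_empty
  ext k
  simp

lemma tauP_succ (i : ℕ) (h : i < d + 1) :
    tauP d θ (i+1) = (X - C (θ ⟨i, h⟩)) * tauP d θ i := by
  rw [tauP, tauP]
  have hset : Finset.univ.filter (fun k : Fin (d+1) => (k : ℕ) < i + 1) =
      insert ⟨i, h⟩ (Finset.univ.filter (fun k : Fin (d+1) => (k : ℕ) < i)) := by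
    ext k
    simp only [Finset.mem_filter, Finset.mem_univ, true_and, Finset.mem_insert, Fin.ext_iff]
    omega
  rw [hset, Finset.prod_insert (by simp)]

lemma tauP_monic (i : ℕ) : (tauP d θ i).Monic :=
  monic_prod_of_monic _ _ fun k _ => monic_X_sub_C _

lemma tauP_natDegree : ∀ i : ℕ, i ≤ d + 1 → (tauP d θ i).natDegree = i := by
  intro i
  induction i with
  | zero => intro _; rw [tauP_zero]; simp
  | succ n ih =>
    intro hn
    rw [tauP_succ θ n (by omega),
      Polynomial.Monic.natDegree_mul (monic_X_sub_C _) (tauP_monic θ n),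
      natDegree_X_sub_C, ih (by omega)]
    omega

lemma tauP_top : tauP d θ (d+1) = ∏ i, (X - C (θ i)) := by
  rw [tauP]
  congr 1
  ext k
  simp [k.isLt]
  exact Nat.lt_succ_iff.1 k.isLt

end TauPoly

namespace LeonardSystem

open Module Polynomial

variable {K : Type} [Field K] {V : Type} [AddCommGroup V] [Module K V] {d : ℕ}
  (L : LeonardSystem K V d)

lemma Es_mul_self (i : Fin (d+1)) : L.Es i * L.Es i = L.Es i := by
  haveI := L.hfin
  exact primIdem_mul_self L.As L.θs L.hdim L.θs_inj L.hEigs i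

lemma Es_mul_Es (i j : Fin (d+1)) (hij : i ≠ j) : L.Es i * L.Es j = 0 := by
  haveI := L.hfin
  exact primIdem_mul_ne L.As L.θs L.hdim L.θs_inj L.hEigs i j hij

lemma sum_Es' : ∑ i, L.Es i = 1 := by
  haveI := L.hfin
  exact sum_primIdem L.As L.θs L.hdim L.θs_inj L.hEigs

lemma Es_A_Es_far (i j : Fin (d+1)) (h : (i:ℕ) + 1 < j ∨ (j:ℕ) + 1 < i) :
    L.Es i * L.A * L.Es j = 0 := L.hFars i j h

/-- `E*_k A^m E*_0 = 0` for `m < k`. -/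
lemma Es_pow_Es_zero : ∀ m : ℕ, ∀ k : Fin (d+1), m < (k : ℕ) → ∀ v : V,
    L.Es k ((L.A ^ m) (L.Es 0 v)) = 0 := by
  intro m
  induction m with
  | zero =>
    intro k hk v
    have hk0 : k ≠ 0 := by
      intro h; rw [h] at hk; simp at hk
    have := congrArg (fun f : Module.End K V => f v) (L.Es_mul_Es k 0 hk0)
    simpa using this
  | succ m ih =>
    intro k hk v
    set w : V := (L.A ^ m) (L.Es 0 v) with hw
    have hsplit : w = ∑ j, L.Es j w := by
      have := congrArg (fun f : Module.End K V => f w) L.sum_Es'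
      simpa [LinearMap.sum_apply] using this.symm
    have hexp : L.Es k ((L.A ^ (m+1)) (L.Es 0 v)) =
        ∑ j, L.Es k (L.A (L.Es j w)) := by
      rw [pow_succ', Module.End.mul_apply, ← hw]
      conv_lhs => rw [hsplit]
      rw [map_sum, map_sum]
    rw [hexp]
    refine Finset.sum_eq_zero fun j _ => ?_
    rcases le_or_gt (j : ℕ) m with hj | hj
    · have hfar : L.Es k * L.A * L.Es j = 0 :=
        L.Es_A_Es_far k j (Or.inr (by omega))
      have := congrArg (fun f : Module.End K V => f w) hfar
      simpa [Module.End.mul_apply] using this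
    · rw [hw, ih j hj v, map_zero, map_zero]

lemma Es_zero_fix {v0 : V} (hv : v0 ∈ LinearMap.range (L.Es 0)) : L.Es 0 v0 = v0 := by
  obtain ⟨u, rfl⟩ := hv
  have := congrArg (fun f : Module.End K V => f u) (L.Es_mul_self 0)
  simpa [Module.End.mul_apply] using this

lemma Es_mem_range (i : Fin (d+1)) (v : V) : L.Es i v ∈ LinearMap.range (L.Es i) :=
  ⟨v, rfl⟩

/-- The chain `E*_k A^k v0` never vanishes. -/
lemma chain_ne_zero {v0 : V} (hv : v0 ∈ LinearMap.range (L.Es 0)) (hv0 : v0 ≠ 0) :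
    ∀ k : Fin (d+1), L.Es k ((L.A ^ (k : ℕ)) v0) ≠ 0 := by
  haveI := L.hfin
  obtain ⟨u, hu⟩ := hv
  intro k
  induction k using Fin.induction with
  | zero =>
    simp only [Fin.val_zero, pow_zero, Module.End.one_apply]
    rw [L.Es_zero_fix ⟨u, hu⟩]
    exact hv0
  | succ i ihp =>
    set w : V := L.Es i.castSucc ((L.A ^ (i : ℕ)) v0) with hwdef
    have hwne : w ≠ 0 := ihp
    set c := i.castSucc with hc
    -- first, reduce to `E*_{i+1} A w`
    have hsplit : (L.A ^ (i : ℕ)) v0 = ∑ j, L.Es j ((L.A ^ (i : ℕ)) v0) := by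
      have := congrArg (fun f : Module.End K V => f ((L.A ^ (i : ℕ)) v0)) L.sum_Es'
      simpa [LinearMap.sum_apply] using this.symm
    have hexp : L.Es i.succ ((L.A ^ ((i : ℕ)+1)) v0) = L.Es i.succ (L.A w) := by
      rw [pow_succ', Module.End.mul_apply]
      conv_lhs => rw [hsplit, map_sum, map_sum]
      rw [Finset.sum_eq_single c]
      · intro j _ hj
        rcases lt_or_gt_of_ne (fun h : (j : ℕ) = (c : ℕ) => hj (Fin.ext h)) with hlt | hgt
        · have hfar : L.Es i.succ * L.A * L.Es j = 0 := by
            refine L.Es_A_Es_far i.succ j (Or.inr ?_)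
            simp only [Fin.val_succ]
            have : (c : ℕ) = (i : ℕ) := by simp [hc]
            omega
          have := congrArg (fun f : Module.End K V => f ((L.A ^ (i : ℕ)) v0)) hfar
          simpa [Module.End.mul_apply] using this
        · have hcv : (c : ℕ) = (i : ℕ) := by simp [hc]
          rw [← hu, L.Es_pow_Es_zero (i : ℕ) j (by omega) u, map_zero, map_zero]
      · intro hcu
        exact absurd (Finset.mem_univ c) hcu
    rw [Fin.val_succ, hexp]
    -- now use one-dimensionality of range E*_c and nonvanishing of E*_{i+1} A E*_c
    intro hzero
    have hnear : L.Es i.succ * L.A * L.Es c ≠ 0 := by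
      refine L.hNears i.succ c (Or.inr ?_)
      simp [hc]
    apply hnear
    ext x
    simp only [Module.End.mul_apply, LinearMap.zero_apply]
    have hwr : w ∈ LinearMap.range (L.Es c) := L.Es_mem_range c _
    have hxr : L.Es c x ∈ LinearMap.range (L.Es c) := L.Es_mem_range c x
    obtain ⟨cc, hcc⟩ := exists_smul_of_mem_range L.As L.θs L.hdim L.θs_inj L.hEigs c
      hwr hwne hxr
    rw [← hcc, map_smul, map_smul, hzero, smul_zero]

/-- `E*_k (p(A) v0) = 0` when `deg p < k`. -/
lemma Es_aeval_lowdeg {v0 : V} (hv : v0 ∈ LinearMap.range (L.Es 0))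
    (k : Fin (d+1)) {p : Polynomial K} (hp : p.degree < (k : ℕ)) :
    L.Es k ((Polynomial.aeval L.A p) v0) = 0 := by
  obtain ⟨u, hu⟩ := hv
  rcases eq_or_ne p 0 with rfl | hp0
  · simp
  have hnd : p.natDegree < (k : ℕ) := by
    rwa [← Polynomial.natDegree_lt_iff_degree_lt hp0] at hp
  rw [Polynomial.aeval_eq_sum_range (p := p) L.A, LinearMap.sum_apply, map_sum]
  refine Finset.sum_eq_zero fun m hm => ?_
  have hmk : m < (k : ℕ) := by
    have := Finset.mem_range.1 hm
    omega
  rw [LinearMap.smul_apply, map_smul, ← hu, L.Es_pow_Es_zero m k hmk u, smul_zero]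

/-- `E*_k τ_k(A) v0 ≠ 0`. -/
lemma Es_tau_ne_zero {v0 : V} (hv : v0 ∈ LinearMap.range (L.Es 0)) (hv0 : v0 ≠ 0)
    (k : Fin (d+1)) : L.Es k ((Polynomial.aeval L.A (tauP d L.θ (k : ℕ))) v0) ≠ 0 := by
  haveI := L.hfin
  have hnd : (tauP d L.θ (k : ℕ)).natDegree = (k : ℕ) :=
    tauP_natDegree L.θ _ (by have := k.isLt; omega)
  have hdeglt : (tauP d L.θ (k : ℕ) - X ^ (k : ℕ)).degree < ((k : ℕ) : WithBot ℕ) := by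
    rcases eq_or_ne (tauP d L.θ (k : ℕ) - X ^ (k : ℕ)) 0 with h0 | h0
    · rw [h0, Polynomial.degree_zero]
      exact WithBot.bot_lt_coe _
    · have hdeg : (tauP d L.θ (k : ℕ)).degree = ((k : ℕ) : WithBot ℕ) := by
        rw [Polynomial.degree_eq_natDegree (tauP_monic L.θ (k : ℕ)).ne_zero, hnd]
      have := Polynomial.degree_sub_lt (q := X ^ (k : ℕ))
        (by rw [hdeg, Polynomial.degree_X_pow]) (tauP_monic L.θ (k : ℕ)).ne_zero
        (by rw [(tauP_monic L.θ (k : ℕ)).leadingCoeff, Polynomial.leadingCoeff_X_pow])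
      rwa [hdeg] at this
  have hsplit : (Polynomial.aeval L.A (tauP d L.θ (k : ℕ))) v0 =
      (L.A ^ (k : ℕ)) v0 + (Polynomial.aeval L.A (tauP d L.θ (k : ℕ) - X ^ (k : ℕ))) v0 := by
    rw [map_sub, LinearMap.sub_apply, map_pow, aeval_X]
    abel
  rw [hsplit, map_add, L.Es_aeval_lowdeg hv k hdeglt, add_zero]
  exact L.chain_ne_zero hv hv0 k

end LeonardSystem

/-- the vectors `τ_i(A) v*_0` form a basis of `V`, with respect to which
`A` is lower bidiagonal with diagonal `θ_0,…,θ_d` and subdiagonal entries `1`. -/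
theorem LeonardSystem.tau_basis {K : Type} [Field K] {V : Type}
    [AddCommGroup V] [Module K V] {d : ℕ} (L : LeonardSystem K V d)
    (v0 : V) (hv : v0 ∈ LinearMap.range (L.Es 0)) (hv0 : v0 ≠ 0) :
    LinearIndependent K (fun i : Fin (d+1) => L.tau (i:ℕ) v0) ∧
    Submodule.span K (Set.range (fun i : Fin (d+1) => L.tau (i:ℕ) v0)) = ⊤ ∧
    ∀ j : Fin (d+1), L.A (L.tau (j:ℕ) v0) =
      L.θ j • L.tau (j:ℕ) v0 +
        (if h : (j:ℕ) + 1 < d + 1 then L.tau ((j:ℕ) + 1) v0 else 0) := by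
  haveI := L.hfin
  -- Part 3: the bidiagonal action of A
  have htau1 : ∀ j : Fin (d+1), L.tau ((j:ℕ)+1) v0 =
      L.A (L.tau (j:ℕ) v0) - L.θ j • L.tau (j:ℕ) v0 := by
    intro j
    simp only [LeonardSystem.tau]
    rw [tauP_succ L.θ (j:ℕ) j.isLt, map_mul, Module.End.mul_apply, map_sub, aeval_X, aeval_C,
      LinearMap.sub_apply, Module.algebraMap_end_apply, Fin.eta]
  have htop : L.tau (d+1) v0 = 0 := by
    simp only [LeonardSystem.tau]
    rw [tauP_top, ← minpoly_eq_prod L.A L.θ L.hdim L.θ_inj L.hEig, minpoly.aeval]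
    rfl
  have hpart3 : ∀ j : Fin (d+1), L.A (L.tau (j:ℕ) v0) =
      L.θ j • L.tau (j:ℕ) v0 + (if h : (j:ℕ)+1 < d+1 then L.tau ((j:ℕ)+1) v0 else 0) := by
    intro j
    by_cases h : (j:ℕ)+1 < d+1
    · rw [dif_pos h, htau1 j]
      abel
    · rw [dif_neg h, add_zero]
      have hjd : (j:ℕ) = d := by have := j.isLt; omega
      have h0 : L.tau ((j:ℕ)+1) v0 = 0 := by rw [hjd]; exact htop
      rw [htau1 j, sub_eq_zero] at h0
      exact h0
  -- Triangularity
  have hupper : ∀ i k : Fin (d+1), (i:ℕ) < (k:ℕ) → L.Es k (L.tau (i:ℕ) v0) = 0 := by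
    intro i k hik
    refine L.Es_aeval_lowdeg hv k ?_
    have hnd : (tauP d L.θ (i:ℕ)).natDegree = (i:ℕ) :=
      tauP_natDegree L.θ _ (by have := i.isLt; omega)
    refine lt_of_le_of_lt (Polynomial.degree_le_natDegree) ?_
    rw [hnd]
    exact_mod_cast hik
  have hdiag : ∀ k : Fin (d+1), L.Es k (L.tau (k:ℕ) v0) ≠ 0 :=
    fun k => L.Es_tau_ne_zero hv hv0 k
  -- Linear independence
  have hli : LinearIndependent K (fun i : Fin (d+1) => L.tau (i:ℕ) v0) := by
    rw [Fintype.linearIndependent_iff]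
    intro g hg
    have step : ∀ j : Fin (d+1), (∀ i : Fin (d+1), (j:ℕ) < (i:ℕ) → g i = 0) → g j = 0 := by
      intro j hgt
      have h0 := congrArg (L.Es j) hg
      rw [map_sum, map_zero] at h0
      simp only [map_smul] at h0
      rw [Finset.sum_eq_single j] at h0
      · exact (smul_eq_zero.1 h0).resolve_right (hdiag j)
      · intro i _ hij
        rcases lt_or_gt_of_ne (fun hc : (i:ℕ) = (j:ℕ) => hij (Fin.ext hc)) with hlt | hgtc
        · rw [hupper i j hlt, smul_zero]
        · rw [hgt i hgtc, zero_smul]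
      · intro hj
        exact absurd (Finset.mem_univ j) hj
    have key : ∀ n : ℕ, ∀ j : Fin (d+1), d - (j:ℕ) ≤ n → g j = 0 := by
      intro n
      induction n with
      | zero =>
        intro j hj
        exact step j fun i hi => by have := i.isLt; omega
      | succ n ih =>
        intro j hj
        exact step j fun i hi => ih i (by have := i.isLt; omega)
    intro i
    exact key d i (by omega)
  have hspan : Submodule.span K (Set.range (fun i : Fin (d+1) => L.tau (i:ℕ) v0)) = ⊤ :=
    hli.span_eq_top_of_card_eq_finrank (by simp [L.hdim])
  exact ⟨hli, hspan, hpart3⟩
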